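/- Let N, m ∈ ℕ, ρ > 0, let I₊ and I₋ be real N×m matrices, and let f : ℝ^N → ℝ be differentiable with gradient ∇f. Suppose the vectors x̂, x* ∈ ℝ^N and ẑ, z, z*, β̂, β, β* ∈ ℝ^m satisfy: (i) ∇f(x̂) + I₋ β̂ = ρ·I₊(z − ẑ); (ii) (ρ/2)·I₋ᵀ(x̂ − x*) = β̂ − β; (iii) (1/2)·I₊ᵀ(x̂ − x*) = ẑ − z*; (iv) ∇f(x*) + I₋ β* = 0; (v) I₋ᵀ x* = 0. Then ⟨∇f(x̂) − ∇f(x*), x̂ − x*⟩ = 2ρ·⟨z − ẑ, ẑ − z*⟩ + (2/ρ)·⟨β − β̂, β̂ − β*⟩. -/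

import Mathlib

open scoped RealInnerProductSpace

lemma adj_inner {N m : ℕ} (A : Matrix (Fin N) (Fin m) ℝ)
    (v : EuclideanSpace ℝ (Fin m)) (w : EuclideanSpace ℝ (Fin N)) :
    ⟪A.toEuclideanLin v, w⟫ = ⟪v, A.transpose.toEuclideanLin w⟫ := by
  rw [← Matrix.conjTranspose_eq_transpose_of_trivial,
    Matrix.toEuclideanLin_conjTranspose_eq_adjoint]
  exact (LinearMap.adjoint_inner_right _ _ _).symm

/-- Key inner-product identity: subtracting the KKT conditions from the ADMM
optimality conditions yields
`⟨∇f(x̂) − ∇f(x*), x̂ − x*⟩ = 2ρ⟨z − ẑ, ẑ − z*⟩ + (2/ρ)⟨β − β̂, β̂ − β*⟩`. -/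
theorem stmt_7 (N m : ℕ) (ρ : ℝ) (hρ : 0 < ρ)
    (Iplus Iminus : Matrix (Fin N) (Fin m) ℝ)
    (f : EuclideanSpace ℝ (Fin N) → ℝ)
    (gradf : EuclideanSpace ℝ (Fin N) → EuclideanSpace ℝ (Fin N))
    (hgrad : ∀ u, HasGradientAt f (gradf u) u)
    (xhat xstar : EuclideanSpace ℝ (Fin N))
    (zhat z zstar βhat β βstar : EuclideanSpace ℝ (Fin m))
    (h1 : gradf xhat + Iminus.toEuclideanLin βhat = ρ • Iplus.toEuclideanLin (z - zhat))
    (h2 : (ρ / 2) • Iminus.transpose.toEuclideanLin (xhat - xstar) = βhat - β)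
    (h3 : (1 / 2 : ℝ) • Iplus.transpose.toEuclideanLin (xhat - xstar) = zhat - zstar)
    (h4 : gradf xstar + Iminus.toEuclideanLin βstar = 0)
    (h5 : Iminus.transpose.toEuclideanLin xstar = 0) :
    ⟪gradf xhat - gradf xstar, xhat - xstar⟫
      = 2 * ρ * ⟪z - zhat, zhat - zstar⟫ + (2 / ρ) * ⟪β - βhat, βhat - βstar⟫ := by
  have hdiff : gradf xhat - gradf xstar
      = ρ • Iplus.toEuclideanLin (z - zhat) - Iminus.toEuclideanLin (βhat - βstar) := by
    rw [eq_sub_of_add_eq h1, eq_neg_of_add_eq_zero_left h4]; simp only [map_sub]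
    abel
  have hPt : Iplus.transpose.toEuclideanLin (xhat - xstar)
      = (2 : ℝ) • (zhat - zstar) := by
    rw [← h3, smul_smul]; norm_num
  have hMt : Iminus.transpose.toEuclideanLin (xhat - xstar)
      = (2 / ρ) • (βhat - β) := by
    rw [← h2, smul_smul]
    field_simp
    rw [one_smul]
  rw [hdiff, inner_sub_left, real_inner_smul_left, adj_inner, adj_inner, hPt, hMt,
    real_inner_smul_right, real_inner_smul_right]
  have h6 : ⟪β - βhat, βhat - βstar⟫ = -⟪βhat - βstar, βhat - β⟫ := by
    rw [real_inner_comm, show β - βhat = -(βhat - β) by abel, inner_neg_right]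
  rw [h6]
  ring
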